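/- Let n ≥ 8 and k ≥ 1 be natural numbers, let M be an n×n integer matrix with det M ≠ 0 whose entries all have absolute value at most k, let c ≥ 1 be a natural number, and let A be an n×n integer matrix such that every column of A contains at most one nonzero entry and every entry of A has absolute value at most n²·(log(2nk))² + (log c)². Then for every vector u ∈ ℝⁿ with Euclidean norm ‖u‖ = 1, one has 1 − β ≤ ‖(Iₙ + (1/(c·det M))·M·A)·u‖ ≤ 1 + β, where β = (k·n⁴·(log(2nk))² + k·n²·(log c)²) / (c·|det M|) and ‖·‖ is the Euclidean (ℓ₂) norm on ℝⁿ. -/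

import Mathlib

theorem opnorm_bounds (n k c : ℕ) (hn : 8 ≤ n) (hk : 1 ≤ k) (hc : 1 ≤ c)
    (M A : Matrix (Fin n) (Fin n) ℤ) (hM : M.det ≠ 0)
    (hMk : ∀ i j, |M i j| ≤ (k : ℤ))
    (hAcol : ∀ j i i', A i j ≠ 0 → A i' j ≠ 0 → i = i')
    (hAbound : ∀ i j, (|A i j| : ℝ) ≤
      (n : ℝ) ^ 2 * (Real.log (2 * n * k)) ^ 2 + (Real.log c) ^ 2)
    (u : EuclideanSpace ℝ (Fin n)) (hu : ‖u‖ = 1) :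
    1 - ((k : ℝ) * n ^ 4 * (Real.log (2 * n * k)) ^ 2 +
          (k : ℝ) * n ^ 2 * (Real.log c) ^ 2) / ((c : ℝ) * |(M.det : ℝ)|) ≤
      ‖(WithLp.equiv 2 (Fin n → ℝ)).symm
          (((1 : Matrix (Fin n) (Fin n) ℝ) +
              ((c : ℝ) * (M.det : ℝ))⁻¹ • ((M * A).map (Int.cast : ℤ → ℝ))).mulVec
            ((WithLp.equiv 2 (Fin n → ℝ)) u))‖ ∧
    ‖(WithLp.equiv 2 (Fin n → ℝ)).symm
        (((1 : Matrix (Fin n) (Fin n) ℝ) +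
            ((c : ℝ) * (M.det : ℝ))⁻¹ • ((M * A).map (Int.cast : ℤ → ℝ))).mulVec
          ((WithLp.equiv 2 (Fin n → ℝ)) u))‖ ≤
      1 + ((k : ℝ) * n ^ 4 * (Real.log (2 * n * k)) ^ 2 +
            (k : ℝ) * n ^ 2 * (Real.log c) ^ 2) / ((c : ℝ) * |(M.det : ℝ)|) := by
  set L : ℝ := Real.log (2 * n * k) with hL
  set D : ℝ := (n : ℝ) ^ 2 * L ^ 2 + (Real.log c) ^ 2 with hD
  set b : ℝ := (k : ℝ) * D with hb
  set β : ℝ := ((k : ℝ) * n ^ 4 * L ^ 2 + (k : ℝ) * n ^ 2 * (Real.log c) ^ 2) /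
      ((c : ℝ) * |(M.det : ℝ)|) with hβ
  set B : Matrix (Fin n) (Fin n) ℝ := (M * A).map (Int.cast : ℤ → ℝ) with hBdef
  set s : ℝ := ((c : ℝ) * (M.det : ℝ))⁻¹ with hs
  have hnR : (8 : ℝ) ≤ (n : ℝ) := by exact_mod_cast hn
  have hkR : (1 : ℝ) ≤ (k : ℝ) := by exact_mod_cast hk
  have hcR : (1 : ℝ) ≤ (c : ℝ) := by exact_mod_cast hc
  have hD0 : 0 ≤ D := by positivity
  have hb0 : 0 ≤ b := by positivity
  have hdet1 : (1 : ℝ) ≤ |(M.det : ℝ)| := by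
    have := Int.one_le_abs hM
    calc (1:ℝ) ≤ ((|M.det| : ℤ) : ℝ) := by exact_mod_cast this
    _ = |(M.det : ℝ)| := by push_cast; ring
  have hden : (0 : ℝ) < (c : ℝ) * |(M.det : ℝ)| := by nlinarith
  -- column sum bound for A
  have hAcolsum : ∀ j : Fin n, ∑ l, (|A l j| : ℝ) ≤ D := by
    intro j
    by_cases h : ∃ l, A l j ≠ 0
    · obtain ⟨l0, hl0⟩ := h
      have : ∑ l, (|A l j| : ℝ) = (|A l0 j| : ℝ) := by
        refine Finset.sum_eq_single l0 (fun l _ hne => ?_) (by simp)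
        by_cases hz : A l j = 0
        · simp [hz]
        · exact absurd (hAcol j l l0 hz hl0) hne
      rw [this]; exact hAbound l0 j
    · push_neg at h
      simp only [h, Int.cast_zero, abs_zero, Finset.sum_const_zero]
      exact hD0
  -- entry bound for B
  have hBent : ∀ i j, |B i j| ≤ b := by
    intro i j
    have : B i j = ∑ l, ((M i l : ℝ) * (A l j : ℝ)) := by
      simp [hBdef, Matrix.mul_apply]
    rw [this]
    calc |∑ l, ((M i l : ℝ) * (A l j : ℝ))| ≤ ∑ l, |(M i l : ℝ) * (A l j : ℝ)| :=
          Finset.abs_sum_le_sum_abs _ _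
      _ = ∑ l, |(M i l : ℝ)| * |(A l j : ℝ)| := by simp [abs_mul]
      _ ≤ ∑ l, (k : ℝ) * |(A l j : ℝ)| := by
          refine Finset.sum_le_sum (fun l _ => ?_)
          have h1 : |(M i l : ℝ)| ≤ (k : ℝ) := by
            have := hMk i l
            calc |(M i l : ℝ)| = ((|M i l| : ℤ) : ℝ) := by push_cast; ring
              _ ≤ (k : ℝ) := by exact_mod_cast this
          exact mul_le_mul_of_nonneg_right h1 (abs_nonneg _)
      _ = (k : ℝ) * ∑ l, (|A l j| : ℝ) := by rw [Finset.mul_sum]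
      _ ≤ (k : ℝ) * D := by
          exact mul_le_mul_of_nonneg_left (hAcolsum j) (by positivity)
  -- components of u bounded by 1
  have husq : ∑ j, (u j) ^ 2 = 1 := by
    have h1 := EuclideanSpace.norm_eq u
    rw [hu] at h1
    have h2 : Real.sqrt (∑ i, ‖u i‖ ^ 2) = 1 := h1.symm
    have h3 : ∑ i, ‖u i‖ ^ 2 = 1 := by
      have := Real.sqrt_eq_one.mp h2
      exact this
    simpa [Real.norm_eq_abs, sq_abs] using h3
  have hui : ∀ j, |u j| ≤ 1 := by
    intro j
    have h1 : (u j) ^ 2 ≤ 1 := by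
      have h2 : (u j) ^ 2 ≤ ∑ x, (u x) ^ 2 := Finset.single_le_sum
        (f := fun j => (u j) ^ 2) (fun i _ => sq_nonneg _) (Finset.mem_univ j)
      rw [husq] at h2
      exact h2
    nlinarith [abs_nonneg (u j), sq_abs (u j)]
  -- component bound for B.mulVec
  have hcomp : ∀ i, |(B.mulVec ((WithLp.equiv 2 (Fin n → ℝ)) u)) i| ≤ (n : ℝ) * b := by
    intro i
    have : (B.mulVec ((WithLp.equiv 2 (Fin n → ℝ)) u)) i = ∑ j, B i j * u j := rfl
    rw [this]
    calc |∑ j, B i j * u j| ≤ ∑ j, |B i j * u j| := Finset.abs_sum_le_sum_abs _ _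
      _ ≤ ∑ j : Fin n, b * 1 := by
          refine Finset.sum_le_sum (fun j _ => ?_)
          rw [abs_mul]
          exact mul_le_mul (hBent i j) (hui j) (abs_nonneg _) hb0
      _ = (n : ℝ) * b := by simp [mul_comm]
  -- norm bound for B.mulVec
  have hBnorm : ‖(WithLp.equiv 2 (Fin n → ℝ)).symm
      (B.mulVec ((WithLp.equiv 2 (Fin n → ℝ)) u))‖ ≤ (n : ℝ) ^ 2 * b := by
    rw [EuclideanSpace.norm_eq]
    have hcb : ∀ i, ‖(WithLp.equiv 2 (Fin n → ℝ)).symm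
        (B.mulVec ((WithLp.equiv 2 (Fin n → ℝ)) u)) i‖ ^ 2 ≤ ((n : ℝ) * b) ^ 2 := by
      intro i
      have h1 : ‖(WithLp.equiv 2 (Fin n → ℝ)).symm
          (B.mulVec ((WithLp.equiv 2 (Fin n → ℝ)) u)) i‖
          = |(B.mulVec ((WithLp.equiv 2 (Fin n → ℝ)) u)) i| := rfl
      rw [h1]
      have := hcomp i
      nlinarith [abs_nonneg ((B.mulVec ((WithLp.equiv 2 (Fin n → ℝ)) u)) i)]
    calc Real.sqrt (∑ i, ‖(WithLp.equiv 2 (Fin n → ℝ)).symm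
          (B.mulVec ((WithLp.equiv 2 (Fin n → ℝ)) u)) i‖ ^ 2)
        ≤ Real.sqrt (((n : ℝ) ^ 2 * b) ^ 2) := by
          apply Real.sqrt_le_sqrt
          calc ∑ i, ‖(WithLp.equiv 2 (Fin n → ℝ)).symm
                (B.mulVec ((WithLp.equiv 2 (Fin n → ℝ)) u)) i‖ ^ 2
              ≤ ∑ _i : Fin n, ((n : ℝ) * b) ^ 2 := Finset.sum_le_sum (fun i _ => hcb i)
            _ = (n : ℝ) * ((n : ℝ) * b) ^ 2 := by simp [mul_comm]
            _ ≤ ((n : ℝ) ^ 2 * b) ^ 2 := by nlinarith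
      _ = (n : ℝ) ^ 2 * b := Real.sqrt_sq (by positivity)
  -- the key vector decomposition
  set w : EuclideanSpace ℝ (Fin n) := (WithLp.equiv 2 (Fin n → ℝ)).symm
      ((s • B).mulVec ((WithLp.equiv 2 (Fin n → ℝ)) u)) with hw
  have hdecomp : (WithLp.equiv 2 (Fin n → ℝ)).symm
      (((1 : Matrix (Fin n) (Fin n) ℝ) + s • B).mulVec
        ((WithLp.equiv 2 (Fin n → ℝ)) u)) = u + w := by
    rw [Matrix.add_mulVec, Matrix.one_mulVec]
    rfl
  have hwβ : ‖w‖ ≤ β := by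
    have h1 : ‖w‖ = |s| * ‖(WithLp.equiv 2 (Fin n → ℝ)).symm
        (B.mulVec ((WithLp.equiv 2 (Fin n → ℝ)) u))‖ := by
      rw [hw, Matrix.smul_mulVec]
      have : (WithLp.equiv 2 (Fin n → ℝ)).symm
          (s • B.mulVec ((WithLp.equiv 2 (Fin n → ℝ)) u))
          = s • (WithLp.equiv 2 (Fin n → ℝ)).symm
          (B.mulVec ((WithLp.equiv 2 (Fin n → ℝ)) u)) := rfl
      rw [this, norm_smul, Real.norm_eq_abs]
    rw [h1]
    have hsabs : |s| = ((c : ℝ) * |(M.det : ℝ)|)⁻¹ := by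
      rw [hs, abs_inv, abs_mul, Nat.abs_cast]
    rw [hsabs]
    have h2 : ((c : ℝ) * |(M.det : ℝ)|)⁻¹ * ((n : ℝ) ^ 2 * b)
        = ((n : ℝ) ^ 2 * b) / ((c : ℝ) * |(M.det : ℝ)|) := by ring
    calc ((c : ℝ) * |(M.det : ℝ)|)⁻¹ * ‖(WithLp.equiv 2 (Fin n → ℝ)).symm
          (B.mulVec ((WithLp.equiv 2 (Fin n → ℝ)) u))‖
        ≤ ((c : ℝ) * |(M.det : ℝ)|)⁻¹ * ((n : ℝ) ^ 2 * b) := by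
          exact mul_le_mul_of_nonneg_left hBnorm (by positivity)
      _ = β := by rw [hβ, hb, hD]; field_simp
  rw [hdecomp]
  constructor
  · have h1 : ‖u‖ ≤ ‖u + w‖ + ‖w‖ := by
      calc ‖u‖ = ‖(u + w) + (-w)‖ := by congr 1; abel
        _ ≤ ‖u + w‖ + ‖-w‖ := norm_add_le _ _
        _ = ‖u + w‖ + ‖w‖ := by rw [norm_neg]
    linarith [hu ▸ h1]
  · have h1 : ‖u + w‖ ≤ ‖u‖ + ‖w‖ := norm_add_le _ _
    rw [hu] at h1
    linarith
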